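/- Let Ω be a finite probability space, let Ŷ : Ω → [0,1] take finitely many values, and let S : Ω → {0,1} with P(S=0) > 0 and P(S=1) > 0. Then the following are equivalent: (i) Ŷ and S are independent; (ii) for every function a mapping values of Ŷ to {0,1}, P(a∘Ŷ = 0 | S=0) + P(a∘Ŷ = 1 | S=1) = 1. -/
import Mathlib


open scoped Classical
noncomputable section

/-- Probability of an event under weight function `p` on a finite sample space. -/
def Pr {Omega : Type*} [Fintype Omega] (p : Omega → ℝ) (A : Omega → Prop) : ℝ :=
  ∑ ω, if A ω then p ω else 0

/-- Conditional probability `P(A | B)`. -/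
def cPr {Omega : Type*} [Fintype Omega] (p : Omega → ℝ) (A B : Omega → Prop) : ℝ :=
  Pr p (fun ω => A ω ∧ B ω) / Pr p B

lemma fin2_cases (s : Fin 2) : s = 0 ∨ s = 1 := by fin_cases s <;> simp

lemma Pr_congr {Omega : Type*} [Fintype Omega] (p : Omega → ℝ) {A B : Omega → Prop}
    (h : ∀ ω, A ω ↔ B ω) : Pr p A = Pr p B := by
  unfold Pr; exact Finset.sum_congr rfl (fun ω _ => by simp [h ω])

lemma Pr_split {Omega : Type*} [Fintype Omega] (p : Omega → ℝ) (A : Omega → Prop)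
    (S : Omega → Fin 2) :
    Pr p A = Pr p (fun ω => A ω ∧ S ω = 0) + Pr p (fun ω => A ω ∧ S ω = 1) := by
  unfold Pr
  rw [← Finset.sum_add_distrib]
  refine Finset.sum_congr rfl (fun ω _ => ?_)
  rcases fin2_cases (S ω) with h | h <;> simp [h]

lemma Pr_compl_inter {Omega : Type*} [Fintype Omega] (p : Omega → ℝ) (A B : Omega → Prop) :
    Pr p (fun ω => ¬ A ω ∧ B ω) = Pr p B - Pr p (fun ω => A ω ∧ B ω) := by
  unfold Pr
  rw [eq_sub_iff_add_eq, ← Finset.sum_add_distrib]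
  refine Finset.sum_congr rfl (fun ω _ => ?_)
  by_cases hA : A ω <;> by_cases hB : B ω <;> simp [hA, hB]

theorem stmt_5 {Omega : Type*} [Fintype Omega] (p : Omega → ℝ)
    (hp : ∀ ω, 0 ≤ p ω) (hsum : ∑ ω, p ω = 1)
    (Yh : Omega → ℝ) (hYh : ∀ ω, Yh ω ∈ Set.Icc (0 : ℝ) 1)
    (S : Omega → Fin 2)
    (hS0 : 0 < Pr p (fun ω => S ω = 0)) (hS1 : 0 < Pr p (fun ω => S ω = 1)) :
    (∀ (A : Set ℝ) (s : Fin 2),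
        Pr p (fun ω => Yh ω ∈ A ∧ S ω = s)
          = Pr p (fun ω => Yh ω ∈ A) * Pr p (fun ω => S ω = s))
    ↔
    (∀ a : ℝ → Fin 2,
        cPr p (fun ω => a (Yh ω) = 0) (fun ω => S ω = 0)
          + cPr p (fun ω => a (Yh ω) = 1) (fun ω => S ω = 1) = 1) := by
  constructor
  · intro hind a
    have h0 : Pr p (fun ω => a (Yh ω) = 0 ∧ S ω = 0)
        = Pr p (fun ω => a (Yh ω) = 0) * Pr p (fun ω => S ω = 0) := by
      have := hind {x | a x = 0} 0
      simpa using this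
    have h1 : Pr p (fun ω => a (Yh ω) = 1 ∧ S ω = 1)
        = Pr p (fun ω => a (Yh ω) = 1) * Pr p (fun ω => S ω = 1) := by
      have := hind {x | a x = 1} 1
      simpa using this
    have hsum2 : Pr p (fun ω => a (Yh ω) = 0) + Pr p (fun ω => a (Yh ω) = 1) = 1 := by
      unfold Pr
      rw [← Finset.sum_add_distrib, ← hsum]
      refine Finset.sum_congr rfl (fun ω _ => ?_)
      rcases fin2_cases (a (Yh ω)) with h | h <;> simp [h]
    unfold cPr
    rw [h0, h1, mul_div_assoc, mul_div_assoc, div_self hS0.ne', div_self hS1.ne',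
      mul_one, mul_one, hsum2]
  · intro hatt A s
    set a : ℝ → Fin 2 := fun x => if x ∈ A then 0 else 1 with ha
    have hkey := hatt a
    have e0 : ∀ ω, (a (Yh ω) = 0) ↔ Yh ω ∈ A := by
      intro ω; by_cases h : Yh ω ∈ A <;> simp [ha, h]
    have e1 : ∀ ω, (a (Yh ω) = 1) ↔ ¬ (Yh ω ∈ A) := by
      intro ω; by_cases h : Yh ω ∈ A <;> simp [ha, h]
    have r0 : cPr p (fun ω => a (Yh ω) = 0) (fun ω => S ω = 0)
        = cPr p (fun ω => Yh ω ∈ A) (fun ω => S ω = 0) := by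
      unfold cPr
      rw [Pr_congr p (A := fun ω => a (Yh ω) = 0 ∧ S ω = 0)
        (B := fun ω => Yh ω ∈ A ∧ S ω = 0) (fun ω => and_congr_left' (e0 ω))]
    have r1 : cPr p (fun ω => a (Yh ω) = 1) (fun ω => S ω = 1)
        = 1 - cPr p (fun ω => Yh ω ∈ A) (fun ω => S ω = 1) := by
      unfold cPr
      rw [Pr_congr p (A := fun ω => a (Yh ω) = 1 ∧ S ω = 1)
        (B := fun ω => ¬ (Yh ω ∈ A) ∧ S ω = 1) (fun ω => and_congr_left' (e1 ω)),
        Pr_compl_inter, sub_div, div_self hS1.ne']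
    rw [r0, r1] at hkey
    -- deduce equality of conditional probabilities
    have heq : cPr p (fun ω => Yh ω ∈ A) (fun ω => S ω = 0)
        = cPr p (fun ω => Yh ω ∈ A) (fun ω => S ω = 1) := by linarith
    set c := cPr p (fun ω => Yh ω ∈ A) (fun ω => S ω = 1) with hc
    have q0 : Pr p (fun ω => Yh ω ∈ A ∧ S ω = 0) = c * Pr p (fun ω => S ω = 0) := by
      have : Pr p (fun ω => Yh ω ∈ A ∧ S ω = 0) / Pr p (fun ω => S ω = 0) = c := by
        rw [← heq]; rfl
      field_simp at this; linarith [this]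
    have q1 : Pr p (fun ω => Yh ω ∈ A ∧ S ω = 1) = c * Pr p (fun ω => S ω = 1) := by
      have : Pr p (fun ω => Yh ω ∈ A ∧ S ω = 1) / Pr p (fun ω => S ω = 1) = c := rfl
      field_simp at this; linarith [this]
    have hPrS : Pr p (fun ω => S ω = 0) + Pr p (fun ω => S ω = 1) = 1 := by
      unfold Pr
      rw [← Finset.sum_add_distrib, ← hsum]
      refine Finset.sum_congr rfl (fun ω _ => ?_)
      rcases fin2_cases (S ω) with h | h <;> simp [h]
    have hA : Pr p (fun ω => Yh ω ∈ A) = c := by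
      rw [Pr_split p (fun ω => Yh ω ∈ A) S, q0, q1, ← mul_add, hPrS, mul_one]
    rcases fin2_cases s with h | h <;> subst h
    · rw [q0, hA]
    · rw [q1, hA]
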